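/- Let a, c, K_W be real numbers with c ≠ a, K_W > 0 and |a| < 1, and let (Σ_t)_{t≥1} satisfy the ARMA(a,c) difference Riccati recursion with arbitrary initial condition Σ_1 ≥ 0. Then the entropy rate of the noise exists and equals the white-noise value: (1/n)·Σ_{t=1}^{n} (1/2)·log(2·π·e·[(c−a)²·Σ_t + K_W]) → (1/2)·log(2·π·e·K_W) as n → ∞. -/

import Mathlib

/-- for `|a| < 1`, along any solution of the ARMA(a,c) difference Riccati
recursion with nonnegative initial condition, the entropy rate of the noise exists and
equals the white-noise value `(1/2)·log(2πe·K_W)`. -/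
theorem stmt_7 (a c KW : ℝ) (hca : c ≠ a) (hKW : 0 < KW) (ha : |a| < 1)
    (Sig : ℕ → ℝ) (h0 : 0 ≤ Sig 0)
    (hrec : ∀ t, Sig (t + 1) =
      c ^ 2 * Sig t + KW - (c * Sig t * (c - a) + KW) ^ 2 / (KW + (c - a) ^ 2 * Sig t)) :
    Filter.Tendsto
      (fun n : ℕ => (1 / (n : ℝ)) * ∑ t ∈ Finset.range n,
        (1 / 2) * Real.log (2 * Real.pi * Real.exp 1 * ((c - a) ^ 2 * Sig t + KW)))
      Filter.atTop
      (nhds ((1 / 2) * Real.log (2 * Real.pi * Real.exp 1 * KW))) := by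
  -- Nonnegativity and geometric decay of Sig
  have step : ∀ t, 0 ≤ Sig t → 0 ≤ Sig (t + 1) ∧ Sig (t + 1) ≤ a ^ 2 * Sig t := by
    intro t ht
    have hden : 0 < KW + (c - a) ^ 2 * Sig t :=
      add_pos_of_pos_of_nonneg hKW (mul_nonneg (sq_nonneg _) ht)
    have heq : Sig (t + 1) = a ^ 2 * KW * Sig t / (KW + (c - a) ^ 2 * Sig t) := by
      rw [hrec t]; field_simp; ring
    constructor
    · rw [heq]; positivity
    · rw [heq, div_le_iff₀ hden]
      nlinarith [sq_nonneg (a * (c - a) * Sig t)]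
  have hpos : ∀ t, 0 ≤ Sig t := by
    intro t
    induction t with
    | zero => exact h0
    | succ n ih => exact (step n ih).1
  have key : ∀ t, 0 ≤ Sig t ∧ Sig (t + 1) ≤ a ^ 2 * Sig t :=
    fun t => ⟨hpos t, (step t (hpos t)).2⟩
  -- Sig t ≤ (a^2)^t * Sig 0
  have hbound : ∀ t, Sig t ≤ (a ^ 2) ^ t * Sig 0 := by
    intro t
    induction t with
    | zero => simp
    | succ n ih =>
      calc Sig (n + 1) ≤ a ^ 2 * Sig n := (key n).2
        _ ≤ a ^ 2 * ((a ^ 2) ^ n * Sig 0) := by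
            apply mul_le_mul_of_nonneg_left ih (sq_nonneg a)
        _ = (a ^ 2) ^ (n + 1) * Sig 0 := by ring
  have hSig0 : Filter.Tendsto Sig Filter.atTop (nhds 0) := by
    have hgeo : Filter.Tendsto (fun t : ℕ => (a ^ 2) ^ t * Sig 0) Filter.atTop (nhds 0) := by
      have : |a ^ 2| < 1 := by
        rw [abs_pow]
        calc |a| ^ 2 ≤ |a| * 1 := by nlinarith [abs_nonneg a]
          _ < 1 := by nlinarith [abs_nonneg a]
      simpa using (tendsto_pow_atTop_nhds_zero_of_abs_lt_one this).mul_const (Sig 0)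
    exact squeeze_zero (fun t => (key t).1) hbound hgeo
  -- term convergence
  set L := (1 / 2) * Real.log (2 * Real.pi * Real.exp 1 * KW) with hL
  have hterm : Filter.Tendsto
      (fun t : ℕ => (1 / 2) * Real.log (2 * Real.pi * Real.exp 1 * ((c - a) ^ 2 * Sig t + KW)))
      Filter.atTop (nhds L) := by
    have harg : Filter.Tendsto
        (fun t : ℕ => 2 * Real.pi * Real.exp 1 * ((c - a) ^ 2 * Sig t + KW))
        Filter.atTop (nhds (2 * Real.pi * Real.exp 1 * KW)) := by
      have := ((hSig0.const_mul ((c - a) ^ 2)).add_const KW).const_mul (2 * Real.pi * Real.exp 1)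
      simpa using this
    have hpos : (0 : ℝ) < 2 * Real.pi * Real.exp 1 * KW := by positivity
    exact ((Real.continuousAt_log hpos.ne').tendsto.comp harg).const_mul (1 / 2)
  have := hterm.cesaro
  simpa [one_div] using this
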